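/- Let γ ∈ [0,1) and M ∈ ℕ with M ≥ 1. Then Σ_{r=1}^M (1/√r) · C(M,r) (1−γ)^r γ^{M−r} ≤ √2 / √((1−γ) M). -/

import Mathlib

open Finset Real

theorem stmt_3 (γ : ℝ) (hγ : γ ∈ Set.Ico (0:ℝ) 1) (M : ℕ) (hM : 1 ≤ M) :
    (∑ r ∈ Icc 1 M,
        (1 / Real.sqrt r) * (Nat.choose M r : ℝ) * (1 - γ) ^ r * γ ^ (M - r))
      ≤ Real.sqrt 2 / Real.sqrt ((1 - γ) * M) := by
  obtain ⟨hγ0, hγ1⟩ := hγ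
  set x : ℝ := 1 - γ with hxdef
  have hx : 0 < x := by simp only [hxdef]; linarith
  set p : ℕ → ℝ := fun r => (Nat.choose M r : ℝ) * x ^ r * γ ^ (M - r) with hp
  have hpnn : ∀ r, 0 ≤ p r := fun r => by
    have := hx.le; positivity
  have hMpos : (0:ℝ) < M := by exact_mod_cast hM
  have hxγ : x + γ = 1 := by simp [hxdef]
  -- sum of p over Icc 1 M is at most 1
  have hsub : Icc 1 M ⊆ Finset.range (M + 1) := by
    intro r hr
    simp only [mem_Icc] at hr
    simp only [Finset.mem_range]; omega
  have hsum1 : ∑ r ∈ Icc 1 M, p r ≤ 1 := by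
    have hfull : ∑ r ∈ Finset.range (M + 1), p r = 1 := by
      have h := add_pow x γ M
      rw [hxγ, one_pow] at h
      rw [h]
      exact Finset.sum_congr rfl fun r _ => by simp [hp]; ring
    calc ∑ r ∈ Icc 1 M, p r
        ≤ ∑ r ∈ Finset.range (M + 1), p r :=
          Finset.sum_le_sum_of_subset_of_nonneg hsub (fun r _ _ => hpnn r)
      _ = 1 := hfull
  -- sum of p r / (r+1) is at most 1 / (x * M)
  have hsum2 : ∑ r ∈ Icc 1 M, p r / (r + 1) ≤ 1 / (x * M) := by
    set q : ℕ → ℝ := fun s => (Nat.choose (M+1) s : ℝ) * x ^ s * γ ^ (M + 1 - s) with hq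
    have hqnn : ∀ s, 0 ≤ q s := fun s => by
      have := hx.le; positivity
    have hqfull : ∑ s ∈ Finset.range (M + 2), q s = 1 := by
      have h := add_pow x γ (M + 1)
      rw [hxγ, one_pow] at h
      rw [h]
      exact Finset.sum_congr rfl fun r _ => by simp [hq]; ring
    have hkey : ∀ r ∈ Icc 1 M, p r / (r + 1) = q (r + 1) / ((M + 1) * x) := by
      intro r hr
      simp only [mem_Icc] at hr
      have hcR : ((M:ℝ) + 1) * (Nat.choose M r : ℝ) =
          (Nat.choose (M+1) (r+1) : ℝ) * ((r:ℝ) + 1) := by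
        exact_mod_cast Nat.add_one_mul_choose_eq M r
      have h1 : M + 1 - (r + 1) = M - r := by omega
      rw [div_eq_div_iff (by positivity) (by positivity)]
      simp only [hp, hq, h1]
      push_cast
      linear_combination (x ^ (r + 1) * γ ^ (M - r)) * hcR
    rw [Finset.sum_congr rfl hkey, ← Finset.sum_div]
    have himg : ∑ r ∈ Icc 1 M, q (r + 1) ≤ 1 := by
      have hmap : ∑ r ∈ Icc 1 M, q (r + 1) = ∑ s ∈ Icc (1+1) (M+1), q s := by
        rw [← Finset.map_add_right_Icc 1 M 1, Finset.sum_map]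
        rfl
      rw [hmap]
      calc ∑ s ∈ Icc (1+1) (M+1), q s
          ≤ ∑ s ∈ Finset.range (M + 2), q s := by
            apply Finset.sum_le_sum_of_subset_of_nonneg _ (fun s _ _ => hqnn s)
            intro s hs
            simp only [mem_Icc] at hs
            simp only [Finset.mem_range]; omega
        _ = 1 := hqfull
    calc (∑ r ∈ Icc 1 M, q (r + 1)) / ((M + 1) * x)
        ≤ 1 / ((M + 1) * x) := by
          apply div_le_div_of_nonneg_right himg (by positivity) |>.trans_eq rfl
      _ ≤ 1 / (x * M) := by
          rw [div_le_div_iff₀ (by positivity) (by positivity)]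
          nlinarith
  -- main chain
  have hstep1 : (∑ r ∈ Icc 1 M,
      (1 / Real.sqrt r) * (Nat.choose M r : ℝ) * x ^ r * γ ^ (M - r))
      ≤ Real.sqrt 2 * ∑ r ∈ Icc 1 M, Real.sqrt (p r) * Real.sqrt (p r / (r + 1)) := by
    rw [Finset.mul_sum]
    apply Finset.sum_le_sum
    intro r hr
    simp only [mem_Icc] at hr
    have hr1 : (1:ℝ) ≤ (r:ℝ) := by exact_mod_cast hr.1
    have hsr : 0 < Real.sqrt r := Real.sqrt_pos.mpr (by linarith)
    have hsr1 : 0 < Real.sqrt ((r:ℝ) + 1) := Real.sqrt_pos.mpr (by linarith)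
    have hfg : Real.sqrt (p r) * Real.sqrt (p r / (r + 1)) =
        p r / Real.sqrt ((r:ℝ) + 1) := by
      rw [← Real.sqrt_mul (hpnn r), Real.sqrt_eq_iff_eq_sq] <;>
        [skip; positivity; positivity]
      field_simp
      linear_combination (p r ^ 2) * Real.sq_sqrt (by positivity : (0:ℝ) ≤ (r:ℝ) + 1)
    rw [hfg]
    have hcmp : 1 / Real.sqrt r ≤ Real.sqrt 2 / Real.sqrt ((r:ℝ) + 1) := by
      rw [div_le_div_iff₀ hsr hsr1]
      have : Real.sqrt ((r:ℝ) + 1) ≤ Real.sqrt (2 * r) :=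
        Real.sqrt_le_sqrt (by linarith)
      rw [Real.sqrt_mul (by norm_num)] at this
      linarith
    calc (1 / Real.sqrt r) * (Nat.choose M r : ℝ) * x ^ r * γ ^ (M - r)
        = (1 / Real.sqrt r) * p r := by simp only [hp]; ring
      _ ≤ (Real.sqrt 2 / Real.sqrt ((r:ℝ) + 1)) * p r := by
          apply mul_le_mul_of_nonneg_right hcmp (hpnn r)
      _ = Real.sqrt 2 * (p r / Real.sqrt ((r:ℝ) + 1)) := by ring
  have hCS : ∑ r ∈ Icc 1 M, Real.sqrt (p r) * Real.sqrt (p r / (r + 1))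
      ≤ Real.sqrt (∑ r ∈ Icc 1 M, p r) * Real.sqrt (∑ r ∈ Icc 1 M, p r / (r + 1)) :=
    Real.sum_sqrt_mul_sqrt_le _ hpnn (fun r => by
      have := hpnn r; positivity)
  have hbound : Real.sqrt (∑ r ∈ Icc 1 M, p r) * Real.sqrt (∑ r ∈ Icc 1 M, p r / (r + 1))
      ≤ 1 / Real.sqrt (x * M) := by
    calc Real.sqrt (∑ r ∈ Icc 1 M, p r) * Real.sqrt (∑ r ∈ Icc 1 M, p r / (r + 1))
        ≤ Real.sqrt 1 * Real.sqrt (1 / (x * M)) := by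
          apply mul_le_mul (Real.sqrt_le_sqrt hsum1) (Real.sqrt_le_sqrt hsum2)
            (Real.sqrt_nonneg _) (Real.sqrt_nonneg _)
      _ = 1 / Real.sqrt (x * M) := by
          rw [Real.sqrt_one, one_mul, one_div, one_div, Real.sqrt_inv]
  calc (∑ r ∈ Icc 1 M,
        (1 / Real.sqrt r) * (Nat.choose M r : ℝ) * x ^ r * γ ^ (M - r))
      ≤ Real.sqrt 2 * ∑ r ∈ Icc 1 M, Real.sqrt (p r) * Real.sqrt (p r / (r + 1)) := hstep1
    _ ≤ Real.sqrt 2 * (1 / Real.sqrt (x * M)) := by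
        apply mul_le_mul_of_nonneg_left (hCS.trans hbound) (Real.sqrt_nonneg _)
    _ = Real.sqrt 2 / Real.sqrt (x * M) := by ring
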